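/- For every λ > 3 and σ ∈ ℝ, −F_σ'''(λ) − (3/(2π)) F_σ''(λ) + (3/(4π²)) F_σ'(λ) − (3/(8π³)) F_σ(λ) > 0, where F_σ(λ) = e^{−2λ} ∫_0^∞ (λ e^{−λy}/(2√(y²+4y))) { (y+2+√(y²+4y))^{−(σ−1/2)} + (y+2−√(y²+4y))^{−(σ−1/2)} } dy. -/

import Mathlib

open Real Set MeasureTheory

noncomputable def Ff (σ lam : ℝ) : ℝ :=
  Real.exp (-2 * lam) *
    ∫ y in Ioi (0 : ℝ),
      (lam * Real.exp (-lam * y) / (2 * Real.sqrt (y ^ 2 + 4 * y))) *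
        ((y + 2 + Real.sqrt (y ^ 2 + 4 * y)) ^ (-(σ - 1 / 2)) +
          (y + 2 - Real.sqrt (y ^ 2 + 4 * y)) ^ (-(σ - 1 / 2)))

noncomputable def kk (σ y : ℝ) : ℝ :=
  ((y + 2 + Real.sqrt (y ^ 2 + 4 * y)) ^ (-(σ - 1 / 2)) +
   (y + 2 - Real.sqrt (y ^ 2 + 4 * y)) ^ (-(σ - 1 / 2))) / (2 * Real.sqrt (y ^ 2 + 4 * y))

lemma sqrt_lt_add_two {y : ℝ} (hy : 0 < y) : Real.sqrt (y ^ 2 + 4 * y) < y + 2 := by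
  have h : Real.sqrt (y ^ 2 + 4 * y) < Real.sqrt ((y + 2) ^ 2) := by
    apply Real.sqrt_lt_sqrt (by nlinarith)
    nlinarith
  rwa [Real.sqrt_sq (by linarith)] at h

lemma sqrt_pos' {y : ℝ} (hy : 0 < y) : 0 < Real.sqrt (y ^ 2 + 4 * y) :=
  Real.sqrt_pos.2 (by nlinarith)

lemma kk_pos (σ : ℝ) {y : ℝ} (hy : 0 < y) : 0 < kk σ y := by
  have h1 := sqrt_lt_add_two hy
  have h2 := sqrt_pos' hy
  apply div_pos
  · have a1 : (0:ℝ) < y + 2 + Real.sqrt (y ^ 2 + 4 * y) := by linarith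
    have a2 : (0:ℝ) < y + 2 - Real.sqrt (y ^ 2 + 4 * y) := by linarith
    exact add_pos (Real.rpow_pos_of_pos a1 _) (Real.rpow_pos_of_pos a2 _)
  · linarith

lemma kk_contOn (σ : ℝ) : ContinuousOn (kk σ) (Ioi 0) := by
  have hs : Continuous fun y : ℝ => Real.sqrt (y ^ 2 + 4 * y) := by
    exact Real.continuous_sqrt.comp (by continuity)
  apply ContinuousOn.div
  · apply ContinuousOn.add
    · apply ContinuousOn.rpow_const
      · exact ((continuous_id.add continuous_const).add hs).continuousOn
      · intro y hy
        have h1 := sqrt_pos' (mem_Ioi.1 hy)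
        have h2 := mem_Ioi.1 hy
        left; intro h; linarith
    · apply ContinuousOn.rpow_const
      · exact ((continuous_id.add continuous_const).sub hs).continuousOn
      · intro y hy
        have h1 := sqrt_lt_add_two (mem_Ioi.1 hy)
        left
        intro h
        linarith
  · exact (continuous_const.mul hs).continuousOn
  · intro y hy
    have := sqrt_pos' (mem_Ioi.1 hy)
    positivity

lemma kk_le (σ : ℝ) {y : ℝ} (hy : 0 < y) :
    kk σ y ≤ (2 * (y + 2)) ^ (⌈|σ - 1/2|⌉₊) / Real.sqrt y := by
  set s := Real.sqrt (y ^ 2 + 4 * y) with hs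
  have h1 : s < y + 2 := sqrt_lt_add_two hy
  have h2 : 0 < s := sqrt_pos' hy
  have hB1 : (1:ℝ) ≤ 2 * (y + 2) := by linarith
  have hss : s ^ 2 = y ^ 2 + 4 * y := Real.sq_sqrt (by nlinarith)
  -- bound each rpow term by (2*(y+2)) ^ |σ - 1/2|
  have key : ∀ b : ℝ, (2 * (y + 2))⁻¹ ≤ b → b ≤ 2 * (y + 2) →
      b ^ (-(σ - 1/2)) ≤ (2 * (y + 2)) ^ |σ - 1/2| := by
    intro b hb1 hb2
    have hbpos : 0 < b := lt_of_lt_of_le (by positivity) hb1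
    rcases le_or_gt 0 (-(σ - 1/2)) with hp | hp
    · calc b ^ (-(σ - 1/2)) ≤ (2 * (y + 2)) ^ (-(σ - 1/2)) :=
            Real.rpow_le_rpow hbpos.le hb2 hp
        _ ≤ (2 * (y + 2)) ^ |σ - 1/2| := by
            apply Real.rpow_le_rpow_of_exponent_le hB1
            exact neg_le_abs _
    · calc b ^ (-(σ - 1/2)) ≤ ((2 * (y + 2))⁻¹) ^ (-(σ - 1/2)) :=
            Real.rpow_le_rpow_of_nonpos (by positivity) hb1 hp.le
        _ = (2 * (y + 2)) ^ (σ - 1/2) := by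
            rw [Real.inv_rpow (by positivity), ← Real.rpow_neg (by positivity), neg_neg]
        _ ≤ (2 * (y + 2)) ^ |σ - 1/2| :=
            Real.rpow_le_rpow_of_exponent_le hB1 (le_abs_self _)
  have t1 : y + 2 + s ≤ 2 * (y + 2) := by linarith
  have t1' : (2 * (y + 2))⁻¹ ≤ y + 2 + s := by
    rw [inv_le_iff_one_le_mul₀ (by linarith)]
    nlinarith
  have t2 : y + 2 - s ≤ 2 * (y + 2) := by linarith
  have t2' : (2 * (y + 2))⁻¹ ≤ y + 2 - s := by
    rw [inv_le_iff_one_le_mul₀ (by linarith)]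
    nlinarith
  have hrn : (2 * (y + 2)) ^ |σ - 1/2| ≤ (2 * (y + 2)) ^ (⌈|σ - 1/2|⌉₊ : ℝ) :=
    Real.rpow_le_rpow_of_exponent_le hB1 (Nat.le_ceil _)
  have hb1 := (key _ t1' t1).trans hrn
  have hb2 := (key _ t2' t2).trans hrn
  have hsy : Real.sqrt y ≤ s := by
    apply Real.sqrt_le_sqrt
    nlinarith
  have hsypos : 0 < Real.sqrt y := Real.sqrt_pos.2 hy
  rw [Real.rpow_natCast] at hb1 hb2
  have hnum : (y + 2 + s) ^ (-(σ - 1/2)) + (y + 2 - s) ^ (-(σ - 1/2)) ≤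
      2 * (2 * (y + 2)) ^ (⌈|σ - 1/2|⌉₊) := by linarith
  calc kk σ y ≤ (2 * (2 * (y + 2)) ^ (⌈|σ - 1/2|⌉₊)) / (2 * s) := by
        unfold kk
        rw [← hs]
        apply div_le_div_of_nonneg_right hnum  -- maybe wrong name
        positivity
    _ = (2 * (y + 2)) ^ (⌈|σ - 1/2|⌉₊) / s := by
        field_simp
    _ ≤ (2 * (y + 2)) ^ (⌈|σ - 1/2|⌉₊) / Real.sqrt y := by
        apply div_le_div_of_nonneg_left (by positivity) hsypos hsy

lemma pow_le_factorial_mul_exp {x : ℝ} (hx : 0 ≤ x) (n : ℕ) :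
    x ^ n ≤ (n.factorial : ℝ) * Real.exp x := by
  have h := Real.sum_le_exp_of_nonneg hx (n + 1)
  have h2 : x ^ n / (n.factorial : ℝ) ≤ Real.exp x := by
    refine le_trans ?_ h
    apply Finset.single_le_sum (f := fun i => x ^ i / (i.factorial : ℝ)) ?_ (Finset.self_mem_range_succ n)
    intro i _
    positivity
  rw [div_le_iff₀ (by positivity)] at h2
  linarith [h2]

lemma integrable_base {c : ℝ} (hc : 0 < c) :
    IntegrableOn (fun y : ℝ => Real.exp (-(c * y)) * y ^ (-(1/2) : ℝ)) (Ioi 0) := by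
  have h := Real.GammaIntegral_convergent (s := 1/2) (by norm_num)
  have h2 := (integrableOn_Ioi_comp_mul_left_iff
      (fun x : ℝ => Real.exp (-x) * x ^ ((1:ℝ)/2 - 1)) 0 hc).2 (by simpa using h)
  have : ∀ y ∈ Ioi (0:ℝ), Real.exp (-(c * y)) * (c * y) ^ ((1:ℝ)/2 - 1) =
      c ^ (-(1/2) : ℝ) * (Real.exp (-(c * y)) * y ^ (-(1/2) : ℝ)) := by
    intro y hy
    have hy' := mem_Ioi.1 hy
    rw [Real.mul_rpow hc.le hy'.le]
    norm_num
    ring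
  have h3 := (integrableOn_congr_fun this measurableSet_Ioi).1 h2
  have h4 := h3.const_mul (c ^ ((1/2) : ℝ))
  refine (integrableOn_congr_fun ?_ measurableSet_Ioi).1 h4
  intro y hy
  simp only
  rw [← mul_assoc, ← Real.rpow_add hc]
  norm_num

lemma pow_mul_exp_neg_le {x : ℝ} (hx : 0 ≤ x) (k : ℕ) :
    x ^ k * Real.exp (-x) ≤ (k.factorial : ℝ) := by
  have h := pow_le_factorial_mul_exp hx k
  calc x ^ k * Real.exp (-x) ≤ (k.factorial : ℝ) * Real.exp x * Real.exp (-x) :=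
        mul_le_mul_of_nonneg_right h (Real.exp_pos _).le
    _ = (k.factorial : ℝ) := by rw [mul_assoc, ← Real.exp_add]; simp

lemma integrable_weight (σ : ℝ) {c : ℝ} (hc : 0 < c) (n : ℕ) :
    IntegrableOn (fun y => (y+2)^n * Real.exp (-(c*(y+2))) * kk σ y) (Ioi 0) := by
  set m := ⌈|σ - 1/2|⌉₊ with hm
  set M : ℝ := 2 ^ m * (((n+m).factorial : ℝ) * (2/c)^(n+m)) with hM
  apply Integrable.mono' ((integrable_base (half_pos hc)).const_mul M)
  · apply ContinuousOn.aestronglyMeasurable ?_ measurableSet_Ioi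
    apply ContinuousOn.mul ?_ (kk_contOn σ)
    exact (Continuous.mul (by continuity) (by continuity)).continuousOn
  · rw [ae_restrict_iff' measurableSet_Ioi]
    apply ae_of_all
    intro y hy
    have hy' := mem_Ioi.1 hy
    have hk := kk_pos σ hy'
    have hkle := kk_le σ hy'
    have hsq : (0:ℝ) < Real.sqrt y := Real.sqrt_pos.2 hy'
    rw [Real.norm_eq_abs, abs_of_nonneg (by positivity)]
    have hfact : (y+2:ℝ)^(n+m) * Real.exp (-(c/2*(y+2))) ≤ ((n+m).factorial : ℝ) * (2/c)^(n+m) := by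
      calc (y+2:ℝ)^(n+m) * Real.exp (-(c/2*(y+2)))
          = (2/c)^(n+m) * ((c/2*(y+2))^(n+m) * Real.exp (-(c/2*(y+2)))) := by
            rw [show ((y:ℝ)+2)^(n+m) = (2/c)^(n+m) * (c/2*(y+2))^(n+m) by
              rw [← mul_pow]; congr 1; field_simp]
            ring
        _ ≤ (2/c)^(n+m) * ((n+m).factorial : ℝ) :=
            mul_le_mul_of_nonneg_left (pow_mul_exp_neg_le (by positivity) _) (by positivity)
        _ = _ := by ring
    have hsplit : Real.exp (-(c*(y+2))) =
        Real.exp (-(c/2*(y+2))) * Real.exp (-(c/2*(y+2))) := by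
      rw [← Real.exp_add]; ring_nf
    have hmono : Real.exp (-(c/2*(y+2))) ≤ Real.exp (-(c/2*y)) := by
      apply Real.exp_le_exp.2
      nlinarith
    calc (y+2)^n * Real.exp (-(c*(y+2))) * kk σ y
        ≤ (y+2)^n * Real.exp (-(c*(y+2))) * ((2*(y+2))^m / Real.sqrt y) :=
          mul_le_mul_of_nonneg_left hkle (by positivity)
      _ = 2^m * ((y+2)^(n+m) * Real.exp (-(c/2*(y+2)))) *
            Real.exp (-(c/2*(y+2))) / Real.sqrt y := by
          rw [hsplit, mul_pow, pow_add]
          ring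
      _ ≤ 2^m * (((n+m).factorial : ℝ) * (2/c)^(n+m)) *
            Real.exp (-(c/2*y)) / Real.sqrt y := by
          apply (div_le_div_iff_of_pos_right hsq).2
          apply mul_le_mul (mul_le_mul_of_nonneg_left hfact (by positivity)) hmono
            (Real.exp_pos _).le (by positivity)
      _ = M * (Real.exp (-(c/2*y)) * y ^ (-(1/2) : ℝ)) := by
          rw [Real.rpow_neg hy'.le, ← Real.sqrt_eq_rpow, div_eq_mul_inv]
          ring

lemma integrable_aux (σ : ℝ) {c : ℝ} (hc : 0 < c) {g : ℝ → ℝ} (hg : ContinuousOn g (Ioi 0))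
    {C : ℝ} {n : ℕ} (hC : ∀ y ∈ Ioi (0:ℝ), |g y| ≤ C * (y+2)^n) :
    IntegrableOn (fun y => g y * Real.exp (-(c*(y+2))) * kk σ y) (Ioi 0) := by
  apply Integrable.mono' ((integrable_weight σ hc n).const_mul C)
  · apply ContinuousOn.aestronglyMeasurable ?_ measurableSet_Ioi
    exact (hg.mul (Real.continuous_exp.comp (by continuity)).continuousOn).mul (kk_contOn σ)
  · rw [ae_restrict_iff' measurableSet_Ioi]
    apply ae_of_all
    intro y hy
    have hy' := mem_Ioi.1 hy
    have hk := (kk_pos σ hy').le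
    have he := (Real.exp_pos (-(c*(y+2)))).le
    rw [Real.norm_eq_abs, abs_mul, abs_mul, abs_of_nonneg he, abs_of_nonneg hk]
    calc |g y| * Real.exp (-(c*(y+2))) * kk σ y
        ≤ (C * (y+2)^n) * Real.exp (-(c*(y+2))) * kk σ y := by
          apply mul_le_mul_of_nonneg_right (mul_le_mul_of_nonneg_right (hC y hy) he) hk
      _ = C * ((y+2)^n * Real.exp (-(c*(y+2))) * kk σ y) := by ring

noncomputable def G0 (σ lam : ℝ) : ℝ :=
  ∫ y in Ioi (0:ℝ), lam * Real.exp (-(lam*(y+2))) * kk σ y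
noncomputable def G1 (σ lam : ℝ) : ℝ :=
  ∫ y in Ioi (0:ℝ), (1 - lam*(y+2)) * Real.exp (-(lam*(y+2))) * kk σ y
noncomputable def G2 (σ lam : ℝ) : ℝ :=
  ∫ y in Ioi (0:ℝ), (y+2) * (lam*(y+2) - 2) * Real.exp (-(lam*(y+2))) * kk σ y
noncomputable def G3 (σ lam : ℝ) : ℝ :=
  ∫ y in Ioi (0:ℝ), (y+2)^2 * (3 - lam*(y+2)) * Real.exp (-(lam*(y+2))) * kk σ y

lemma integrable_G0 (σ : ℝ) {lam : ℝ} (h : 0 < lam) :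
    IntegrableOn (fun y => lam * Real.exp (-(lam*(y+2))) * kk σ y) (Ioi 0) := by
  apply integrable_aux σ h continuousOn_const (C := lam) (n := 0)
  intro y hy
  have := mem_Ioi.1 hy
  rw [abs_of_nonneg h.le]
  nlinarith

lemma integrable_G1 (σ : ℝ) {lam : ℝ} (h : 0 < lam) :
    IntegrableOn (fun y => (1 - lam*(y+2)) * Real.exp (-(lam*(y+2))) * kk σ y) (Ioi 0) := by
  apply integrable_aux σ h (by fun_prop) (C := 1 + lam) (n := 1)
  intro y hy
  have hy' := mem_Ioi.1 hy
  rw [abs_le]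
  constructor <;> nlinarith [abs_nonneg (1 - lam*(y+2))]

lemma integrable_G2 (σ : ℝ) {lam : ℝ} (h : 0 < lam) :
    IntegrableOn (fun y => (y+2) * (lam*(y+2) - 2) * Real.exp (-(lam*(y+2))) * kk σ y) (Ioi 0) := by
  apply integrable_aux σ h (by fun_prop) (C := 1 + lam) (n := 2)
  intro y hy
  have hy' := mem_Ioi.1 hy
  rw [abs_le]
  constructor <;> nlinarith

lemma integrable_G3 (σ : ℝ) {lam : ℝ} (h : 0 < lam) :
    IntegrableOn (fun y => (y+2)^2 * (3 - lam*(y+2)) * Real.exp (-(lam*(y+2))) * kk σ y) (Ioi 0) := by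
  apply integrable_aux σ h (by fun_prop) (C := 3 + lam) (n := 3)
  intro y hy
  have hy' := mem_Ioi.1 hy
  rw [abs_le]
  constructor <;>
    nlinarith [mul_nonneg (sq_nonneg (y+2)) (show (0:ℝ) ≤ y+1 by linarith),
      mul_nonneg (mul_nonneg h.le (sq_nonneg (y+2))) (show (0:ℝ) ≤ y+2 by linarith)]

lemma exp_hasDeriv (y x : ℝ) :
    HasDerivAt (fun x => Real.exp (-(x*(y+2)))) (-(y+2) * Real.exp (-(x*(y+2)))) x := by
  have h : HasDerivAt (fun x : ℝ => -(x*(y+2))) (-(y+2)) x := by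
    simpa [Pi.neg_def] using ((hasDerivAt_id x).mul_const (y+2)).neg
  simpa [mul_comm] using h.exp

lemma hasDerivAt_G0 (σ : ℝ) {lam : ℝ} (h : 0 < lam) :
    HasDerivAt (G0 σ) (G1 σ lam) lam := by
  have hε : 0 < lam/2 := half_pos h
  have main := hasDerivAt_integral_of_dominated_loc_of_deriv_le (μ := volume.restrict (Ioi 0))
    (F := fun x y => x * Real.exp (-(x*(y+2))) * kk σ y)
    (F' := fun x y => (1 - x*(y+2)) * Real.exp (-(x*(y+2))) * kk σ y)
    (x₀ := lam)
    (bound := fun y => (1 + 3*lam/2) * ((y+2)^1 * Real.exp (-(lam/2*(y+2))) * kk σ y))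
    (Metric.ball_mem_nhds lam hε)
    (Filter.Eventually.of_forall fun x => ContinuousOn.aestronglyMeasurable
      (((continuousOn_const.mul (Real.continuous_exp.comp (by continuity)).continuousOn)).mul
        (kk_contOn σ)) measurableSet_Ioi)
    (integrable_G0 σ h)
    (ContinuousOn.aestronglyMeasurable
      ((((by fun_prop : Continuous fun y : ℝ => (1 - lam*(y+2)) * Real.exp (-(lam*(y+2)))).continuousOn)).mul
        (kk_contOn σ)) measurableSet_Ioi)
    ?_ ((integrable_weight σ hε 1).const_mul _) ?_
  · exact main.2
  · rw [ae_restrict_iff' measurableSet_Ioi]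
    apply ae_of_all
    intro y hy x hx
    have hy' := mem_Ioi.1 hy
    rw [Metric.mem_ball, Real.dist_eq, abs_lt] at hx
    have hk := (kk_pos σ hy').le
    have he := (Real.exp_pos (-(x*(y+2)))).le
    rw [Real.norm_eq_abs, abs_mul, abs_mul, abs_of_nonneg he, abs_of_nonneg hk]
    have h1 : |1 - x*(y+2)| ≤ (1 + 3*lam/2)*(y+2) := by
      rw [abs_le]; constructor <;> nlinarith
    have h2 : Real.exp (-(x*(y+2))) ≤ Real.exp (-(lam/2*(y+2))) := by
      apply Real.exp_le_exp.2; nlinarith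
    calc |1 - x*(y+2)| * Real.exp (-(x*(y+2))) * kk σ y
        ≤ ((1 + 3*lam/2)*(y+2)) * Real.exp (-(lam/2*(y+2))) * kk σ y := by
          apply mul_le_mul_of_nonneg_right (mul_le_mul h1 h2 (Real.exp_pos _).le (by positivity)) hk
      _ = (1 + 3*lam/2) * ((y+2)^1 * Real.exp (-(lam/2*(y+2))) * kk σ y) := by ring
  · apply ae_of_all
    intro y x _
    have hd := ((hasDerivAt_id x).mul (exp_hasDeriv y x)).mul_const (kk σ y)
    simp only [Pi.mul_apply, id_eq] at hd
    convert hd using 1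
    · rfl
    ring

lemma hasDerivAt_G1 (σ : ℝ) {lam : ℝ} (h : 0 < lam) :
    HasDerivAt (G1 σ) (G2 σ lam) lam := by
  have hε : 0 < lam/2 := half_pos h
  have main := hasDerivAt_integral_of_dominated_loc_of_deriv_le (μ := volume.restrict (Ioi 0))
    (F := fun x y => (1 - x*(y+2)) * Real.exp (-(x*(y+2))) * kk σ y)
    (F' := fun x y => (y+2) * (x*(y+2) - 2) * Real.exp (-(x*(y+2))) * kk σ y)
    (x₀ := lam)
    (bound := fun y => (1 + 3*lam/2) * ((y+2)^2 * Real.exp (-(lam/2*(y+2))) * kk σ y))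
    (Metric.ball_mem_nhds lam hε)
    (Filter.Eventually.of_forall fun x => ContinuousOn.aestronglyMeasurable
      ((((by fun_prop : Continuous fun y : ℝ => (1 - x*(y+2)) * Real.exp (-(x*(y+2)))).continuousOn)).mul
        (kk_contOn σ)) measurableSet_Ioi)
    (integrable_G1 σ h)
    (ContinuousOn.aestronglyMeasurable
      ((((by fun_prop : Continuous fun y : ℝ => (y+2) * (lam*(y+2) - 2) * Real.exp (-(lam*(y+2)))).continuousOn)).mul
        (kk_contOn σ)) measurableSet_Ioi)
    ?_ ((integrable_weight σ hε 2).const_mul _) ?_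
  · have heq : (fun y => (y+2) * (lam*(y+2) - 2) * Real.exp (-(lam*(y+2))) * kk σ y) =
        fun y => ((y+2) * (lam*(y+2) - 2) * Real.exp (-(lam*(y+2)))) * kk σ y := by
      funext y; ring
    exact main.2
  · rw [ae_restrict_iff' measurableSet_Ioi]
    apply ae_of_all
    intro y hy x hx
    have hy' := mem_Ioi.1 hy
    rw [Metric.mem_ball, Real.dist_eq, abs_lt] at hx
    have hk := (kk_pos σ hy').le
    have he := (Real.exp_pos (-(x*(y+2)))).le
    rw [Real.norm_eq_abs, abs_mul, abs_mul, abs_of_nonneg he, abs_of_nonneg hk]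
    have h1 : |(y+2) * (x*(y+2) - 2)| ≤ (1 + 3*lam/2)*(y+2)^2 := by
      rw [abs_le]; constructor <;> nlinarith
    have h2 : Real.exp (-(x*(y+2))) ≤ Real.exp (-(lam/2*(y+2))) := by
      apply Real.exp_le_exp.2; nlinarith
    calc |(y+2) * (x*(y+2) - 2)| * Real.exp (-(x*(y+2))) * kk σ y
        ≤ ((1 + 3*lam/2)*(y+2)^2) * Real.exp (-(lam/2*(y+2))) * kk σ y := by
          apply mul_le_mul_of_nonneg_right (mul_le_mul h1 h2 (Real.exp_pos _).le (by positivity)) hk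
      _ = (1 + 3*lam/2) * ((y+2)^2 * Real.exp (-(lam/2*(y+2))) * kk σ y) := by ring
  · apply ae_of_all
    intro y x _
    have hin : HasDerivAt (fun x : ℝ => 1 - x*(y+2)) (-(y+2)) x := by
      simpa using ((hasDerivAt_id x).mul_const (y+2)).const_sub 1
    have hd := (hin.mul (exp_hasDeriv y x)).mul_const (kk σ y)
    simp only [Pi.mul_apply] at hd
    convert hd using 1
    · rfl
    ring

lemma hasDerivAt_G2 (σ : ℝ) {lam : ℝ} (h : 0 < lam) :
    HasDerivAt (G2 σ) (G3 σ lam) lam := by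
  have hε : 0 < lam/2 := half_pos h
  have main := hasDerivAt_integral_of_dominated_loc_of_deriv_le (μ := volume.restrict (Ioi 0))
    (F := fun x y => (y+2) * (x*(y+2) - 2) * Real.exp (-(x*(y+2))) * kk σ y)
    (F' := fun x y => (y+2)^2 * (3 - x*(y+2)) * Real.exp (-(x*(y+2))) * kk σ y)
    (x₀ := lam)
    (bound := fun y => (3/2 + 3*lam/2) * ((y+2)^3 * Real.exp (-(lam/2*(y+2))) * kk σ y))
    (Metric.ball_mem_nhds lam hε)
    (Filter.Eventually.of_forall fun x => ContinuousOn.aestronglyMeasurable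
      ((((by fun_prop : Continuous fun y : ℝ => (y+2) * (x*(y+2) - 2) * Real.exp (-(x*(y+2)))).continuousOn)).mul
        (kk_contOn σ)) measurableSet_Ioi)
    (integrable_G2 σ h)
    (ContinuousOn.aestronglyMeasurable
      ((((by fun_prop : Continuous fun y : ℝ => (y+2)^2 * (3 - lam*(y+2)) * Real.exp (-(lam*(y+2)))).continuousOn)).mul
        (kk_contOn σ)) measurableSet_Ioi)
    ?_ ((integrable_weight σ hε 3).const_mul _) ?_
  · exact main.2
  · rw [ae_restrict_iff' measurableSet_Ioi]
    apply ae_of_all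
    intro y hy x hx
    have hy' := mem_Ioi.1 hy
    rw [Metric.mem_ball, Real.dist_eq, abs_lt] at hx
    have hk := (kk_pos σ hy').le
    have he := (Real.exp_pos (-(x*(y+2)))).le
    rw [Real.norm_eq_abs, abs_mul, abs_mul, abs_of_nonneg he, abs_of_nonneg hk]
    have h1 : |(y+2)^2 * (3 - x*(y+2))| ≤ (3/2 + 3*lam/2)*(y+2)^3 := by
      have ht : (0:ℝ) < y + 2 := by linarith
      rw [abs_le]
      constructor <;>
        nlinarith [mul_nonneg (mul_nonneg (sq_nonneg (y+2)) ht.le)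
            (show (0:ℝ) ≤ 3*lam/2 - x by linarith [hx.2]),
          mul_nonneg (mul_nonneg (sq_nonneg (y+2)) ht.le) (show (0:ℝ) ≤ x by linarith [hx.1]),
          mul_nonneg (sq_nonneg (y+2)) hy'.le]
    have h2 : Real.exp (-(x*(y+2))) ≤ Real.exp (-(lam/2*(y+2))) := by
      apply Real.exp_le_exp.2; nlinarith
    calc |(y+2)^2 * (3 - x*(y+2))| * Real.exp (-(x*(y+2))) * kk σ y
        ≤ ((3/2 + 3*lam/2)*(y+2)^3) * Real.exp (-(lam/2*(y+2))) * kk σ y := by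
          apply mul_le_mul_of_nonneg_right (mul_le_mul h1 h2 (Real.exp_pos _).le (by positivity)) hk
      _ = (3/2 + 3*lam/2) * ((y+2)^3 * Real.exp (-(lam/2*(y+2))) * kk σ y) := by ring
  · apply ae_of_all
    intro y x _
    have hin : HasDerivAt (fun x : ℝ => (y+2) * (x*(y+2) - 2)) ((y+2)*(y+2)) x := by
      simpa using (((hasDerivAt_id x).mul_const (y+2)).sub_const 2).const_mul (y+2)
    have hd := (hin.mul (exp_hasDeriv y x)).mul_const (kk σ y)
    simp only [Pi.mul_apply, id_eq] at hd
    convert hd using 1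
    · rfl
    ring

lemma Ff_eq (σ : ℝ) : Ff σ = G0 σ := by
  funext lam
  unfold Ff G0 kk
  rw [← integral_const_mul]
  congr 1
  funext y
  rw [show -(lam*(y+2)) = -lam*y + -2*lam by ring, Real.exp_add]
  ring

lemma deriv_Ff (σ : ℝ) {x : ℝ} (hx : 0 < x) : deriv (Ff σ) x = G1 σ x := by
  rw [Ff_eq]; exact (hasDerivAt_G0 σ hx).deriv

lemma deriv2_Ff (σ : ℝ) {x : ℝ} (hx : 0 < x) : deriv (deriv (Ff σ)) x = G2 σ x := by
  have hev : deriv (Ff σ) =ᶠ[nhds x] G1 σ := by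
    filter_upwards [isOpen_Ioi.mem_nhds (mem_Ioi.2 hx)] with z hz
    exact deriv_Ff σ (mem_Ioi.1 hz)
  rw [hev.deriv_eq]
  exact (hasDerivAt_G1 σ hx).deriv

lemma deriv3_Ff (σ : ℝ) {x : ℝ} (hx : 0 < x) :
    deriv (deriv (deriv (Ff σ))) x = G3 σ x := by
  have hev : deriv (deriv (Ff σ)) =ᶠ[nhds x] G2 σ := by
    filter_upwards [isOpen_Ioi.mem_nhds (mem_Ioi.2 hx)] with z hz
    exact deriv2_Ff σ (mem_Ioi.1 hz)
  rw [hev.deriv_eq]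
  exact (hasDerivAt_G2 σ hx).deriv

theorem F_combination_positive (σ lam : ℝ) (hlam : 3 < lam) :
    0 < -iteratedDeriv 3 (Ff σ) lam - 3 / (2 * π) * iteratedDeriv 2 (Ff σ) lam +
        3 / (4 * π ^ 2) * deriv (Ff σ) lam - 3 / (8 * π ^ 3) * Ff σ lam := by
  have hl0 : (0:ℝ) < lam := by linarith
  have hπ := Real.pi_gt_three
  have hπ0 := Real.pi_pos
  set a : ℝ := 3 / (2 * π) with ha_def
  have ha : 0 < a := by positivity
  have ha2 : a < 1/2 := by
    rw [ha_def, div_lt_iff₀ (by positivity)]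
    linarith
  have hc2 : 3 / (4 * π ^ 2) = a^2/3 := by
    rw [ha_def]; field_simp; ring
  have hc3 : 3 / (8 * π ^ 3) = a^3/9 := by
    rw [ha_def]; field_simp; ring
  have e3 : iteratedDeriv 3 (Ff σ) = deriv (deriv (deriv (Ff σ))) := by
    have k1 : iteratedDeriv 3 (Ff σ) = deriv (iteratedDeriv 2 (Ff σ)) := iteratedDeriv_succ
    have k2 : iteratedDeriv 2 (Ff σ) = deriv (iteratedDeriv 1 (Ff σ)) := iteratedDeriv_succ
    rw [k1, k2, iteratedDeriv_one]
  have e2 : iteratedDeriv 2 (Ff σ) = deriv (deriv (Ff σ)) := by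
    have k2 : iteratedDeriv 2 (Ff σ) = deriv (iteratedDeriv 1 (Ff σ)) := iteratedDeriv_succ
    rw [k2, iteratedDeriv_one]
  rw [e3, e2, deriv3_Ff σ hl0, deriv2_Ff σ hl0, deriv_Ff σ hl0, Ff_eq]
  -- abbreviate the integrands
  have h0 := integrable_G0 σ hl0
  have h1 := integrable_G1 σ hl0
  have h2 := integrable_G2 σ hl0
  have h3 := integrable_G3 σ hl0
  set W : ℝ → ℝ := fun y =>
    -((y+2)^2 * (3 - lam*(y+2)) * Real.exp (-(lam*(y+2))) * kk σ y)
    - a * ((y+2) * (lam*(y+2) - 2) * Real.exp (-(lam*(y+2))) * kk σ y)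
    + a^2/3 * ((1 - lam*(y+2)) * Real.exp (-(lam*(y+2))) * kk σ y)
    - a^3/9 * (lam * Real.exp (-(lam*(y+2))) * kk σ y) with hW_def
  have hWint : Integrable W (volume.restrict (Ioi 0)) :=
    (((h3.neg).sub (h2.const_mul a)).add (h1.const_mul (a^2/3))).sub (h0.const_mul (a^3/9))
  have hWpos : ∀ y ∈ Ioi (0:ℝ), 0 < W y := by
    intro y hy
    have hy' := mem_Ioi.1 hy
    have hk := kk_pos σ hy'
    have he := Real.exp_pos (-(lam*(y+2)))
    have ht2 : (2:ℝ) ≤ y + 2 := by linarith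
    have hP : 0 < (y+2)^3 - a*(y+2)^2 - a^2/3*(y+2) - a^3/9 := by
      nlinarith [sq_nonneg (y+2), sq_nonneg a, mul_nonneg (sq_nonneg (y+2)) hy'.le,
        mul_nonneg ha.le (sq_nonneg (y+2)), mul_nonneg (mul_nonneg ha.le ha.le) hy'.le,
        mul_nonneg (sq_nonneg a) hy'.le]
    have hQ : 0 < lam*((y+2)^3 - a*(y+2)^2 - a^2/3*(y+2) - a^3/9)
        - 3*(y+2)^2 + 2*a*(y+2) + a^2/3 := by
      have h3P : 3*((y+2)^3 - a*(y+2)^2 - a^2/3*(y+2) - a^3/9) <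
          lam*((y+2)^3 - a*(y+2)^2 - a^2/3*(y+2) - a^3/9) :=
        mul_lt_mul_of_pos_right hlam hP
      nlinarith [sq_nonneg (y+2), sq_nonneg a, mul_nonneg (sq_nonneg (y+2)) hy'.le,
        mul_nonneg ha.le (sq_nonneg (y+2)), mul_nonneg (mul_nonneg ha.le ha.le) hy'.le,
        mul_nonneg ha.le hy'.le]
    have hfact : W y = (lam*((y+2)^3 - a*(y+2)^2 - a^2/3*(y+2) - a^3/9)
        - 3*(y+2)^2 + 2*a*(y+2) + a^2/3) * (Real.exp (-(lam*(y+2))) * kk σ y) := by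
      rw [hW_def]; ring
    rw [hfact]
    exact mul_pos hQ (mul_pos he hk)
  have hnonneg : 0 ≤ᵐ[volume.restrict (Ioi (0:ℝ))] W := by
    refine (ae_restrict_iff' measurableSet_Ioi).2 (ae_of_all _ fun y hy => ?_)
    exact (hWpos y hy).le
  have hkey : 0 < ∫ y in Ioi (0:ℝ), W y := by
    rw [integral_pos_iff_support_of_nonneg_ae hnonneg hWint]
    have hsub : Ioi (0:ℝ) ⊆ Function.support W := fun y hy => (hWpos y hy).ne'
    have hle := measure_mono (μ := volume.restrict (Ioi (0:ℝ))) hsub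
    rw [Measure.restrict_apply_self] at hle
    calc (0:ENNReal) < volume (Ioi (0:ℝ)) := by rw [Real.volume_Ioi]; simp
      _ ≤ _ := hle
  have H3n : Integrable (fun y => -((y+2)^2 * (3 - lam*(y+2)) * Real.exp (-(lam*(y+2))) * kk σ y))
      (volume.restrict (Ioi (0:ℝ))) := h3.neg
  have H2m : Integrable (fun y => a * ((y+2) * (lam*(y+2) - 2) * Real.exp (-(lam*(y+2))) * kk σ y))
      (volume.restrict (Ioi (0:ℝ))) := h2.const_mul a
  have H1m : Integrable (fun y => a^2/3 * ((1 - lam*(y+2)) * Real.exp (-(lam*(y+2))) * kk σ y))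
      (volume.restrict (Ioi (0:ℝ))) := h1.const_mul _
  have H0m : Integrable (fun y => a^3/9 * (lam * Real.exp (-(lam*(y+2))) * kk σ y))
      (volume.restrict (Ioi (0:ℝ))) := h0.const_mul _
  have H32 : Integrable (fun y =>
      -((y+2)^2 * (3 - lam*(y+2)) * Real.exp (-(lam*(y+2))) * kk σ y)
      - a * ((y+2) * (lam*(y+2) - 2) * Real.exp (-(lam*(y+2))) * kk σ y))
      (volume.restrict (Ioi (0:ℝ))) := H3n.sub H2m
  have H321 : Integrable (fun y =>
      -((y+2)^2 * (3 - lam*(y+2)) * Real.exp (-(lam*(y+2))) * kk σ y)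
      - a * ((y+2) * (lam*(y+2) - 2) * Real.exp (-(lam*(y+2))) * kk σ y)
      + a^2/3 * ((1 - lam*(y+2)) * Real.exp (-(lam*(y+2))) * kk σ y))
      (volume.restrict (Ioi (0:ℝ))) := H32.add H1m
  have hsplit : (∫ y in Ioi (0:ℝ), W y) =
      -G3 σ lam - a * G2 σ lam + a^2/3 * G1 σ lam - a^3/9 * G0 σ lam := by
    have hWW : (∫ y in Ioi (0:ℝ), W y) = ∫ y in Ioi (0:ℝ),
        (-((y+2)^2 * (3 - lam*(y+2)) * Real.exp (-(lam*(y+2))) * kk σ y)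
        - a * ((y+2) * (lam*(y+2) - 2) * Real.exp (-(lam*(y+2))) * kk σ y)
        + a^2/3 * ((1 - lam*(y+2)) * Real.exp (-(lam*(y+2))) * kk σ y)
        - a^3/9 * (lam * Real.exp (-(lam*(y+2))) * kk σ y)) := rfl
    unfold G0 G1 G2 G3
    rw [hWW, integral_sub H321 H0m, integral_add H32 H1m, integral_sub H3n H2m, integral_neg,
      integral_const_mul, integral_const_mul, integral_const_mul]
  rw [hc2, hc3]
  rw [hsplit] at hkey
  linarith
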